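/- Let p, q be positive natural numbers with N = p + q, let J ∈ 𝔏 be the constant diagonal matrix diag(1,…,1,−1,…,−1) (p ones, q minus-ones), and let C = {X ∈ 𝔏 : ω(X) = X, trace(X) = 0} be the compact real form, with K = {X ∈ C : J*X*J = X} and P = {X ∈ C : J*X*J = −X}. Then the noncompact real form obtained by the Weyl unitary trick satisfies: {Y + i·Z : Y ∈ K, Z ∈ P} = {X ∈ 𝔏 : trace(X) = 0 and Xₙ = −J*(X₋ₙ)ᴴ*J for all n ∈ ℤ}, i.e., K ⊕ iP is exactly the fixed-point set (intersected with trace zero) of the conjugate-linear involution θ = σ_J ∘ ω, which is the loop algebra su^{(1)}(p,q). -/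

import Mathlib

noncomputable section

/-- The loop algebra: `N × N` matrices over Laurent polynomials, a Lie ring under the
commutator bracket `⁅a, b⁆ = a * b - b * a`. -/
abbrev Loop (N : ℕ) := Matrix (Fin N) (Fin N) (LaurentPolynomial ℂ)

/-- The matrix of `n`-th Laurent coefficients of the entries of `a`. -/
def coeffM {N : ℕ} (a : Loop N) (n : ℤ) : Matrix (Fin N) (Fin N) ℂ :=
  fun i j => (a i j).coeff n

/-- The Cartan involution `ω`, determined by `(ω a)ₙ = −(a₋ₙ)ᴴ` for all `n : ℤ`,
i.e. the map `X(t) ↦ −conj(X)(t⁻¹)ᵗ`. -/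
def omega {N : ℕ} (a : Loop N) : Loop N :=
  fun i j => AddMonoidAlgebra.ofCoeff (Finsupp.sum (a j i).coeff fun n c => Finsupp.single (-n) (-(starRingEnd ℂ c)))

/-- The constant diagonal matrix `J = diag(1,…,1,−1,…,−1)` (`p` ones, `q` minus-ones),
as an element of the loop algebra `Loop (p + q)`. -/
def Jmat (p q : ℕ) : Loop (p + q) :=
  Matrix.diagonal fun i => if (i : ℕ) < p then 1 else -1

/-- The constant diagonal matrix `J = diag(1,…,1,−1,…,−1)` with complex entries. -/
def Jmat₀ (p q : ℕ) : Matrix (Fin (p + q)) (Fin (p + q)) ℂ :=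
  Matrix.diagonal fun i => if (i : ℕ) < p then 1 else -1

/-- `K`: the `σ_J`-fixed part of the compact real form. -/
def Kset (p q : ℕ) : Set (Loop (p + q)) :=
  {X | omega X = X ∧ Matrix.trace X = 0 ∧ Jmat p q * X * Jmat p q = X}

/-- `P`: the `σ_J`-anti-fixed part of the compact real form. -/
def Pset (p q : ℕ) : Set (Loop (p + q)) :=
  {X | omega X = X ∧ Matrix.trace X = 0 ∧ Jmat p q * X * Jmat p q = -X}

lemma coeff_neg (f : LaurentPolynomial ℂ) (m : ℤ) : (-f).coeff m = -(f.coeff m) :=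
  Finsupp.neg_apply f.coeff m
lemma coeff_add (f g : LaurentPolynomial ℂ) (m : ℤ) : (f + g).coeff m = f.coeff m + g.coeff m :=
  Finsupp.add_apply f.coeff g.coeff m
lemma coeff_sub (f g : LaurentPolynomial ℂ) (m : ℤ) : (f - g).coeff m = f.coeff m - g.coeff m :=
  Finsupp.sub_apply f.coeff g.coeff m
lemma coeff_smul (c : ℂ) (f : LaurentPolynomial ℂ) (m : ℤ) : (c • f).coeff m = c * f.coeff m :=
  Finsupp.smul_apply c f.coeff m
lemma coeff_zero (m : ℤ) : (0 : LaurentPolynomial ℂ).coeff m = 0 := rfl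

def dd (p q : ℕ) (i : Fin (p + q)) : ℂ := if (i : ℕ) < p then 1 else -1

lemma dd_conj (p q : ℕ) (i : Fin (p + q)) : (starRingEnd ℂ) (dd p q i) = dd p q i := by
  unfold dd; split <;> simp

lemma omega_coeff {N : ℕ} (a : Loop N) (i j : Fin N) (m : ℤ) :
    (omega a i j).coeff m = -(starRingEnd ℂ) ((a j i).coeff (-m)) := by
  classical
  rw [omega, AddMonoidAlgebra.coeff_ofCoeff, Finsupp.sum_apply, Finsupp.sum]
  simp only [Finsupp.single_apply]
  rw [Finset.sum_eq_single (-m)]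
  · by_cases h : (-m) ∈ (a j i).coeff.support
    · simp
    · simp only [Finsupp.notMem_support_iff] at h
      simp [h]
  · intro b _ hb
    rw [if_neg]
    omega
  · intro h
    simp only [Finsupp.notMem_support_iff] at h
    simp [h]

lemma JXJ_coeff (p q : ℕ) (X : Loop (p + q)) (i j : Fin (p + q)) (m : ℤ) :
    ((Jmat p q * X * Jmat p q) i j).coeff m = dd p q i * (X i j).coeff m * dd p q j := by
  rw [Jmat, Matrix.mul_diagonal, Matrix.diagonal_mul, dd, dd]
  split <;> split <;> simp [coeff_neg]

lemma J0BJ0 (p q : ℕ) (B : Matrix (Fin (p + q)) (Fin (p + q)) ℂ) (i j : Fin (p + q)) :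
    (Jmat₀ p q * B * Jmat₀ p q) i j = dd p q i * B i j * dd p q j := by
  rw [Jmat₀, Matrix.mul_diagonal, Matrix.diagonal_mul, dd, dd]

lemma Loop.ext' {N : ℕ} {a b : Loop N} (h : ∀ i j (m : ℤ), (a i j).coeff m = (b i j).coeff m) : a = b :=
  funext fun i => funext fun j => AddMonoidAlgebra.ext (Finsupp.ext (h i j))

lemma trace_coeff {N : ℕ} (a : Loop N) (m : ℤ) :
    (Matrix.trace a).coeff m = ∑ i, (a i i).coeff m := by
  rw [Matrix.trace, AddMonoidAlgebra.coeff_sum]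
  exact Finsupp.finset_sum_apply _ _ _

/-- The Weyl unitary trick: `K ⊕ iP` is exactly the trace-zero fixed-point set of the
conjugate-linear involution `θ = σ_J ∘ ω`, i.e. the noncompact real form
`su⁽¹⁾(p,q)` given by `Xₙ = −J (X₋ₙ)ᴴ J` for all `n`. -/
theorem weylUnitaryTrick_su_pq (p q : ℕ) (hp : 0 < p) (hq : 0 < q) :
    {x : Loop (p + q) | ∃ Y ∈ Kset p q, ∃ Z ∈ Pset p q, x = Y + Complex.I • Z} =
      {X : Loop (p + q) | Matrix.trace X = 0 ∧
        ∀ n : ℤ, coeffM X n = -(Jmat₀ p q * (coeffM X (-n)).conjTranspose * Jmat₀ p q)} := by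
  ext X
  simp only [Set.mem_setOf_eq]
  constructor
  · rintro ⟨Y, ⟨hωY, htY, hJY⟩, Z, ⟨hωZ, htZ, hJZ⟩, rfl⟩
    constructor
    · rw [Matrix.trace_add, Matrix.trace_smul, htY, htZ, smul_zero, add_zero]
    · intro n
      funext i j
      have hY1 : -((starRingEnd ℂ) ((Y j i).coeff (-n))) = (Y i j).coeff n := by
        rw [← omega_coeff]
        exact Finsupp.ext_iff.mp (congrArg AddMonoidAlgebra.coeff (congrFun (congrFun hωY i) j)) n
      have hZ1 : -((starRingEnd ℂ) ((Z j i).coeff (-n))) = (Z i j).coeff n := by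
        rw [← omega_coeff]
        exact Finsupp.ext_iff.mp (congrArg AddMonoidAlgebra.coeff (congrFun (congrFun hωZ i) j)) n
      have hY2 : dd p q i * (Y i j).coeff n * dd p q j = (Y i j).coeff n := by
        rw [← JXJ_coeff]
        exact Finsupp.ext_iff.mp (congrArg AddMonoidAlgebra.coeff (congrFun (congrFun hJY i) j)) n
      have hZ2 : dd p q i * (Z i j).coeff n * dd p q j = -((Z i j).coeff n) := by
        rw [← JXJ_coeff]
        have := Finsupp.ext_iff.mp (congrArg AddMonoidAlgebra.coeff (congrFun (congrFun hJZ i) j)) n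
        rw [this]
        exact (Matrix.neg_apply Z i j ▸ rfl : ((-Z) i j).coeff n = -((Z i j).coeff n))
      show ((Y + Complex.I • Z) i j).coeff n
          = (-(Jmat₀ p q * (coeffM (Y + Complex.I • Z) (-n)).conjTranspose * Jmat₀ p q)) i j
      rw [Matrix.neg_apply, J0BJ0, Matrix.conjTranspose_apply]
      simp only [coeffM, Matrix.add_apply, Matrix.smul_apply, coeff_add, coeff_smul,
        Complex.star_def, map_add, map_mul, Complex.conj_I]
      linear_combination (-(dd p q i * dd p q j)) * hY1
        + (Complex.I * dd p q i * dd p q j) * hZ1 - hY2 + Complex.I * hZ2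
  · rintro ⟨htr, hX⟩
    have hx : ∀ (i j : Fin (p + q)) (n : ℤ),
        (X i j).coeff n = -(dd p q i * (starRingEnd ℂ) ((X j i).coeff (-n)) * dd p q j) := by
      intro i j n
      have h := congrFun (congrFun (hX n) i) j
      rw [Matrix.neg_apply, J0BJ0, Matrix.conjTranspose_apply] at h
      simpa [coeffM, Complex.star_def] using h
    have htr' : ∀ m : ℤ, ∑ i, (X i i).coeff m = 0 := by
      intro m
      have := Finsupp.ext_iff.mp (congrArg AddMonoidAlgebra.coeff htr) m
      rwa [trace_coeff, coeff_zero] at this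
    refine ⟨(2⁻¹ : ℂ) • (X + omega X), ⟨?_, ?_, ?_⟩,
      (-(2⁻¹) * Complex.I : ℂ) • (X - omega X), ⟨?_, ?_, ?_⟩, ?_⟩
    · -- omega Y = Y
      apply Loop.ext'
      intro i j m
      simp only [Matrix.smul_apply, Matrix.add_apply, coeff_smul, coeff_add, omega_coeff,
        neg_neg, map_add, map_mul, map_neg, Complex.conj_conj, map_inv₀, map_ofNat]
      ring
    · -- trace Y = 0
      apply AddMonoidAlgebra.ext
      apply Finsupp.ext
      intro m
      rw [trace_coeff, coeff_zero]
      have : ∀ i : Fin (p + q), (((2⁻¹ : ℂ) • (X + omega X)) i i).coeff m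
          = 2⁻¹ * (X i i).coeff m - 2⁻¹ * (starRingEnd ℂ) ((X i i).coeff (-m)) := by
        intro i
        simp only [Matrix.smul_apply, Matrix.add_apply, coeff_smul, coeff_add, omega_coeff]
        ring
      rw [Finset.sum_congr rfl fun i _ => this i, Finset.sum_sub_distrib,
        ← Finset.mul_sum, ← Finset.mul_sum, ← map_sum, htr' m, htr' (-m)]
      simp
    · -- J Y J = Y
      apply Loop.ext'
      intro i j m
      rw [JXJ_coeff]
      have hc : (starRingEnd ℂ) ((X j i).coeff (-m)) = -(dd p q j * (X i j).coeff m * dd p q i) := by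
        have h2 := congrArg (starRingEnd ℂ) (hx j i (-m))
        rw [neg_neg] at h2
        simpa [map_mul, dd_conj, Complex.conj_conj] using h2
      simp only [Matrix.smul_apply, Matrix.add_apply, coeff_smul, coeff_add, omega_coeff]
      linear_combination (-(2⁻¹ : ℂ)) * hx i j m + (2⁻¹ : ℂ) * hc
    · -- omega Z = Z
      apply Loop.ext'
      intro i j m
      simp only [Matrix.smul_apply, Matrix.sub_apply, coeff_smul, coeff_sub, omega_coeff,
        neg_neg, map_sub, map_mul, map_neg, Complex.conj_conj, map_inv₀, map_ofNat,
        Complex.conj_I]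
      ring
    · -- trace Z = 0
      apply AddMonoidAlgebra.ext
      apply Finsupp.ext
      intro m
      rw [trace_coeff, coeff_zero]
      have : ∀ i : Fin (p + q), (((-(2⁻¹) * Complex.I : ℂ) • (X - omega X)) i i).coeff m
          = (-(2⁻¹) * Complex.I) * (X i i).coeff m
            + (-(2⁻¹) * Complex.I) * (starRingEnd ℂ) ((X i i).coeff (-m)) := by
        intro i
        simp only [Matrix.smul_apply, Matrix.sub_apply, coeff_smul, coeff_sub, omega_coeff]
        ring
      rw [Finset.sum_congr rfl fun i _ => this i, Finset.sum_add_distrib,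
        ← Finset.mul_sum, ← Finset.mul_sum, ← map_sum, htr' m, htr' (-m)]
      simp
    · -- J Z J = -Z
      apply Loop.ext'
      intro i j m
      rw [JXJ_coeff]
      have hc : (starRingEnd ℂ) ((X j i).coeff (-m)) = -(dd p q j * (X i j).coeff m * dd p q i) := by
        have h2 := congrArg (starRingEnd ℂ) (hx j i (-m))
        rw [neg_neg] at h2
        simpa [map_mul, dd_conj, Complex.conj_conj] using h2
      simp only [Matrix.neg_apply, Matrix.smul_apply, Matrix.sub_apply, coeff_neg, coeff_smul,
        coeff_sub, omega_coeff]
      linear_combination (-(2⁻¹ : ℂ) * Complex.I) * hx i j m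
        + (-(2⁻¹ : ℂ) * Complex.I) * hc
    · -- X = Y + I • Z
      apply Loop.ext'
      intro i j m
      simp only [Matrix.add_apply, Matrix.smul_apply, Matrix.sub_apply, coeff_add, coeff_smul,
        coeff_sub, omega_coeff]
      linear_combination (2⁻¹ * ((X i j).coeff m + (starRingEnd ℂ) ((X j i).coeff (-m)))) * Complex.I_mul_I
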